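/- (Invariance off the characteristic spine; proved within Lemma 3.4.) For every edge f ∈ E1 with f ∉ spine1(e1*), the adjacent superiors and adjacent inferiors of f are unchanged by the merge: S_G(f) = S_{G1}(f) and I_G(f) = I_{G1}(f), where the subscript indicates in which tree the notion is computed. Symmetrically for f ∈ E2 with f ∉ spine2(e2*). -/

import Mathlib

/- Single tree setting: `G` is a finite tree with injective edge ranks `r`.
`edgesBetween G e f` is the set of edges strictly between edges `e` and `f`
on the unique tree path connecting them (an edge `g ∉ {e,f}` lies on this path
iff it belongs to every walk containing both `e` and `f`). -/

open SimpleGraph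

variable {V : Type*}

/-- The set of edges lying strictly between edges `e` and `f` on the tree path
connecting them (excluding `e` and `f`). -/
def edgesBetween (G : SimpleGraph V) (e f : Sym2 V) : Set (Sym2 V) :=
  {g | g ∈ G.edgeSet ∧ g ≠ e ∧ g ≠ f ∧
    ∀ (a b : V) (w : G.Walk a b), e ∈ w.edges → f ∈ w.edges → g ∈ w.edges}

/-- `f` is an adjacent superior of `e`: `r e < r f` and every edge `g` on the
path between `e` and `f` satisfies `r g < r e`. -/
def AdjSup (G : SimpleGraph V) (r : Sym2 V → ℕ) (e f : Sym2 V) : Prop :=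
  f ∈ G.edgeSet ∧ r e < r f ∧ ∀ g ∈ edgesBetween G e f, r g < r e

/-- `f` is an adjacent inferior of `e`: `r f < r e` and every edge `g` on the
path between `e` and `f` satisfies `r g < r e`. -/
def AdjInf (G : SimpleGraph V) (r : Sym2 V → ℕ) (e f : Sym2 V) : Prop :=
  f ∈ G.edgeSet ∧ r f < r e ∧ ∀ g ∈ edgesBetween G e f, r g < r e

/-- `f` is the SLD parent of `e`: the minimum-rank adjacent superior of `e`. -/
def IsParent (G : SimpleGraph V) (r : Sym2 V → ℕ) (e f : Sym2 V) : Prop :=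
  AdjSup G r e f ∧ ∀ g, AdjSup G r e g → r f ≤ r g

/-- The spine of `e`: the set of edges obtained by iterating the SLD parent
function starting from `e` (including `e` itself). -/
def spine (G : SimpleGraph V) (r : Sym2 V → ℕ) (e : Sym2 V) : Set (Sym2 V) :=
  {f | Relation.ReflTransGen (IsParent G r) e f}


section Aux

variable {T : SimpleGraph V}

lemma mem_support_of_mem_edge {e : Sym2 V} {x : V} (he : e ∈ T.edgeSet) (hx : x ∈ e) :
    x ∈ T.support := by
  induction e with
  | _ a b =>
    rw [Sym2.mem_iff] at hx
    rcases hx with rfl | rfl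
    · exact ⟨b, (T.mem_edgeSet).mp he⟩
    · exact ⟨a, ((T.mem_edgeSet).mp he).symm⟩

lemma exists_adj_of_mem_edgeSet {e : Sym2 V} (he : e ∈ T.edgeSet) :
    ∃ x y, T.Adj x y ∧ e = s(x, y) := by
  induction e with
  | _ a b => exact ⟨a, b, (T.mem_edgeSet).mp he, rfl⟩

lemma walk_start_mem_support {a b : V} (w : T.Walk a b) (hb : b ∈ T.support) : a ∈ T.support := by
  cases w with
  | nil => exact hb
  | cons h w => exact ⟨_, h⟩

lemma walk_support_mem_support {a b : V} :
    ∀ (w : T.Walk a b) (x : V), x ∈ w.support → x ∈ T.support ∨ (x = a ∧ x = b)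
  | Walk.nil, x, hx => Or.inr (by simp_all [Walk.support_nil])
  | Walk.cons h w, x, hx => by
    rw [Walk.support_cons, List.mem_cons] at hx
    rcases hx with rfl | hx
    · exact Or.inl ⟨_, h⟩
    · rcases walk_support_mem_support w x hx with h' | ⟨rfl, rfl⟩
      · exact Or.inl h'
      · exact Or.inl ⟨_, h.symm⟩

lemma exists_walk_subedges {a b c d : V} (w : T.Walk a b) (hc : c ∈ w.support)
    (hd : d ∈ w.support) : ∃ w' : T.Walk c d, ∀ k ∈ w'.edges, k ∈ w.edges := by
  haveI := Classical.decEq V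
  have hd2 : d ∈ ((w.takeUntil c hc).reverse.append w).support := by
    rw [Walk.mem_support_append_iff]; exact Or.inr hd
  refine ⟨((w.takeUntil c hc).reverse.append w).takeUntil d hd2, fun k hk => ?_⟩
  have hk2 := Walk.edges_takeUntil_subset _ hd2 hk
  rw [Walk.edges_append, List.mem_append, Walk.edges_reverse, List.mem_reverse] at hk2
  rcases hk2 with hk2 | hk2
  · exact Walk.edges_takeUntil_subset _ hc hk2
  · exact hk2

lemma edgesBetween_comm (G : SimpleGraph V) (e f : Sym2 V) :
    edgesBetween G e f = edgesBetween G f e := by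
  ext k
  constructor <;> rintro ⟨h1, h2, h3, h4⟩ <;>
    exact ⟨h1, h3, h2, fun a b w hf he => h4 a b w he hf⟩

lemma edgesBetween_mono {G : SimpleGraph V} {e f c k : Sym2 V} (hc : c ∈ edgesBetween G e f)
    (hk : k ∈ edgesBetween G e c) (hkf : k ≠ f) : k ∈ edgesBetween G e f :=
  ⟨hk.1, hk.2.1, hkf, fun a b w hew hfw => hk.2.2.2 a b w hew (hc.2.2.2 a b w hew hfw)⟩

lemma edgesBetween_triangle {G : SimpleGraph V} {g e f : Sym2 V} (he : e ∈ G.edgeSet) :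
    edgesBetween G g f ⊆ edgesBetween G g e ∪ {e} ∪ edgesBetween G e f := by
  intro k hk
  obtain ⟨hkE, hkg, hkf, hkw⟩ := hk
  by_cases h1 : k = e
  · exact Or.inl (Or.inr h1)
  by_cases h2 : k ∈ edgesBetween G g e
  · exact Or.inl (Or.inl h2)
  by_cases h3 : k ∈ edgesBetween G e f
  · exact Or.inr h3
  exfalso
  haveI := Classical.decEq V
  have hw1 : ∃ a b, ∃ w : G.Walk a b, g ∈ w.edges ∧ e ∈ w.edges ∧ k ∉ w.edges := by
    by_contra hcon
    push_neg at hcon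
    exact h2 ⟨hkE, hkg, h1, fun a b w hg hew => hcon a b w hg hew⟩
  have hw2 : ∃ a b, ∃ w : G.Walk a b, e ∈ w.edges ∧ f ∈ w.edges ∧ k ∉ w.edges := by
    by_contra hcon
    push_neg at hcon
    exact h3 ⟨hkE, h1, hkf, fun a b w hew hfw => hcon a b w hew hfw⟩
  obtain ⟨a1, b1, w1, hg1, he1, hk1⟩ := hw1
  obtain ⟨a2, b2, w2, he2, hf2, hk2⟩ := hw2
  obtain ⟨p, q, hadj, rfl⟩ := exists_adj_of_mem_edgeSet he
  have hp1 : p ∈ w1.support := w1.fst_mem_support_of_mem_edges he1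
  have hp2 : p ∈ w2.support := w2.fst_mem_support_of_mem_edges he2
  set W := w1.append ((w1.dropUntil p hp1).reverse.append
    ((w2.takeUntil p hp2).reverse.append w2)) with hW
  have hWsub : ∀ j ∈ W.edges, j ∈ w1.edges ∨ j ∈ w2.edges := by
    intro j hj
    rw [hW] at hj
    simp only [Walk.edges_append, List.mem_append, Walk.edges_reverse, List.mem_reverse] at hj
    rcases hj with hj | (hj | (hj | hj))
    · exact Or.inl hj
    · exact Or.inl (Walk.edges_dropUntil_subset _ hp1 hj)
    · exact Or.inr (Walk.edges_takeUntil_subset _ hp2 hj)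
    · exact Or.inr hj
  have hgW : g ∈ W.edges := by
    rw [hW]; simp only [Walk.edges_append, List.mem_append]; tauto
  have hfW : f ∈ W.edges := by
    rw [hW]; simp only [Walk.edges_append, List.mem_append]; tauto
  rcases hWsub k (hkw _ _ W hgW hfW) with h | h
  · exact hk1 h
  · exact hk2 h

end Aux

section TreeAux

variable {T : SimpleGraph V}

def toInduceWalk {s : Set V} :
    ∀ {a b : V} (w : T.Walk a b) (hw : ∀ x ∈ w.support, x ∈ s),
      (T.induce s).Walk ⟨a, hw a w.start_mem_support⟩ ⟨b, hw b w.end_mem_support⟩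
  | _, _, Walk.nil, _ => Walk.nil
  | _, _, Walk.cons h w, hw =>
    Walk.cons (by exact h) (toInduceWalk w (fun x hx => hw x (by simp [hx])))

lemma toInduceWalk_map {s : Set V} {a b : V} (w : T.Walk a b)
    (hw : ∀ x ∈ w.support, x ∈ s) :
    (toInduceWalk w hw).map (Embedding.induce s).toHom = w := by
  induction w with
  | nil => rfl
  | cons h w ih => simp only [toInduceWalk, Walk.map_cons]; exact congrArg (Walk.cons h) (ih _)

end TreeAux

section TreeAux2

variable {T : SimpleGraph V}

lemma tree_path_unique (hT : (T.induce T.support).IsTree) {s t : V}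
    (p q : T.Walk s t) (hp : p.IsPath) (hq : q.IsPath) : p = q := by
  by_cases hst : s = t
  · subst hst
    have h1 : (⟨p, hp⟩ : T.Path s s) = Path.nil := Path.loop_eq _
    have h2 : (⟨q, hq⟩ : T.Path s s) = Path.nil := Path.loop_eq _
    have := h1.trans h2.symm
    exact congrArg Subtype.val this
  · have hps : ∀ x ∈ p.support, x ∈ T.support := by
      intro x hx
      rcases walk_support_mem_support p x hx with h | ⟨rfl, rfl⟩
      · exact h
      · exact absurd rfl hst
    have hqs : ∀ x ∈ q.support, x ∈ T.support := by
      intro x hx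
      rcases walk_support_mem_support q x hx with h | ⟨rfl, rfl⟩
      · exact h
      · exact absurd rfl hst
    have hpi : (toInduceWalk p hps).IsPath := by
      apply Walk.IsPath.of_map (f := (Embedding.induce T.support).toHom)
      rw [toInduceWalk_map]; exact hp
    have hqi : (toInduceWalk q hqs).IsPath := by
      apply Walk.IsPath.of_map (f := (Embedding.induce T.support).toHom)
      rw [toInduceWalk_map]; exact hq
    have := hT.IsAcyclic.path_unique ⟨toInduceWalk p hps, hpi⟩ ⟨toInduceWalk q hqs, hqi⟩
    have h2 : toInduceWalk p hps = toInduceWalk q hqs := congrArg Subtype.val this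
    have h3 := toInduceWalk_map p hps
    rw [h2] at h3
    exact h3.symm.trans (toInduceWalk_map q hqs)

lemma tree_reachable (hT : (T.induce T.support).IsTree) {s t : V}
    (hs : s ∈ T.support) (ht : t ∈ T.support) : Nonempty (T.Walk s t) := by
  obtain ⟨w⟩ := hT.isConnected.preconnected ⟨s, hs⟩ ⟨t, ht⟩
  exact ⟨w.map (Embedding.induce T.support).toHom⟩

lemma path_edges_subset_walk (hT : (T.induce T.support).IsTree) {s t : V}
    {P : T.Walk s t} (hP : P.IsPath) (w : T.Walk s t) : ∀ k ∈ P.edges, k ∈ w.edges := by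
  haveI := Classical.decEq V
  have : P = w.bypass := tree_path_unique hT P w.bypass hP w.bypass_isPath
  intro k hk
  exact w.edges_bypass_subset (this ▸ hk)

end TreeAux2

section TreeAux3

variable {T : SimpleGraph V}

lemma chopFront {p q x : V} (hpq : T.Adj p q) (P : T.Walk q x) (hP : P.IsPath) :
    ∃ (p' q' : V) (hpq' : T.Adj p' q') (P' : T.Walk q' x), s(p, q) = s(p', q') ∧ P'.IsPath ∧
      s(p, q) ∉ P'.edges ∧ ∀ k ∈ P'.edges, k ∈ P.edges := by
  by_cases he : s(p, q) ∈ P.edges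
  · cases P with
    | nil => simp at he
    | @cons _ c _ h P2 =>
      rw [Walk.edges_cons, List.mem_cons] at he
      have hqP2 : q ∉ P2.support := ((Walk.cons_isPath_iff h P2).mp hP).2
      have hP2 : P2.IsPath := ((Walk.cons_isPath_iff h P2).mp hP).1
      rcases he with he | he
      · have hc : c = p := by
          rcases Sym2.eq_iff.mp he with ⟨h1, h2⟩ | ⟨h1, h2⟩
          · exact absurd h1 hpq.ne
          · exact h1.symm
        subst hc
        refine ⟨q, c, h, P2, he, hP2, ?_, fun k hk => List.mem_cons_of_mem _ hk⟩
        have hnd := hP.edges_nodup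
        rw [Walk.edges_cons] at hnd
        rw [he]
        exact (List.nodup_cons.mp hnd).1
      · exact absurd (P2.snd_mem_support_of_mem_edges he) hqP2
  · exact ⟨p, q, hpq, P, rfl, hP, he, fun _ hk => hk⟩

lemma pathRep (hT : (T.induce T.support).IsTree) {e f : Sym2 V}
    (he : e ∈ T.edgeSet) (hf : f ∈ T.edgeSet) (hef : e ≠ f) :
    ∃ (p q x y : V) (_ : T.Adj p q) (_ : T.Adj x y) (P : T.Walk q x),
      e = s(p, q) ∧ f = s(x, y) ∧ P.IsPath ∧ e ∉ P.edges ∧ f ∉ P.edges ∧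
      ∀ k, k ∈ edgesBetween T e f ↔ k ∈ P.edges := by
  haveI := Classical.decEq V
  obtain ⟨p0, q0, hpq0, rfl⟩ := exists_adj_of_mem_edgeSet he
  obtain ⟨x0, y0, hxy0, rfl⟩ := exists_adj_of_mem_edgeSet hf
  have hq0 : q0 ∈ T.support := ⟨_, hpq0.symm⟩
  have hx0 : x0 ∈ T.support := ⟨_, hxy0⟩
  obtain ⟨w0⟩ := tree_reachable hT hq0 hx0
  obtain ⟨p', q', hpq', P1, he1, hP1, heP1, hP1sub⟩ := chopFront hpq0 w0.bypass w0.bypass_isPath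
  obtain ⟨y', x', hyx', P2, hf2, hP2, hfP2, hP2sub⟩ := chopFront hxy0.symm P1.reverse hP1.reverse
  -- P := P2.reverse : q' → x'
  have hfeq : s(x0, y0) = s(x', y') := (Sym2.eq_swap).trans (hf2.trans (Sym2.eq_swap))
  have heP : s(p0, q0) ∉ P2.reverse.edges := by
    rw [Walk.edges_reverse, List.mem_reverse]
    intro hmem
    have := hP2sub _ hmem
    rw [Walk.edges_reverse, List.mem_reverse] at this
    exact heP1 this
  have hfP : s(x0, y0) ∉ P2.reverse.edges := by
    rw [Walk.edges_reverse, List.mem_reverse, Sym2.eq_swap]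
    exact hfP2
  refine ⟨p', q', x', y', hpq', hyx'.symm, P2.reverse, he1, hfeq, hP2.reverse, heP, hfP, ?_⟩
  intro k
  constructor
  · rintro ⟨hkE, hke, hkf, hkw⟩
    -- the explicit walk W
    set W : T.Walk p' y' := Walk.cons hpq' (P2.reverse.append (Walk.cons hyx'.symm Walk.nil))
      with hW
    have heW : s(p0, q0) ∈ W.edges := by
      rw [hW, Walk.edges_cons]; rw [he1]; exact List.mem_cons_self
    have hfW : s(x0, y0) ∈ W.edges := by
      rw [hW, Walk.edges_cons, Walk.edges_append, Walk.edges_cons]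
      rw [hfeq]
      simp
    have hkW := hkw _ _ W heW hfW
    rw [hW, Walk.edges_cons, Walk.edges_append, Walk.edges_cons, Walk.edges_nil] at hkW
    rcases List.mem_cons.mp hkW with h | h
    · exact absurd (h.trans he1.symm) hke
    · rcases List.mem_append.mp h with h | h
      · exact h
      · rcases List.mem_cons.mp h with h | h
        · exact absurd (h.trans hfeq.symm) hkf
        · simp at h
  · intro hk
    have hkE : k ∈ T.edgeSet := P2.reverse.edges_subset_edgeSet hk
    have hke : k ≠ s(p0, q0) := fun h => heP (h ▸ hk)
    have hkf : k ≠ s(x0, y0) := fun h => hfP (h ▸ hk)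
    refine ⟨hkE, hke, hkf, fun a b w hew hfw => ?_⟩
    have hq'w : q' ∈ w.support := by
      rw [he1] at hew; exact w.snd_mem_support_of_mem_edges hew
    have hx'w : x' ∈ w.support := by
      rw [hfeq] at hfw; exact w.fst_mem_support_of_mem_edges hfw
    obtain ⟨w', hw'⟩ := exists_walk_subedges w hq'w hx'w
    exact hw' k (path_edges_subset_walk hT hP2.reverse w' k hk)

lemma not_mutual_between (hT : (T.induce T.support).IsTree) {e c1 c2 : Sym2 V}
    (he : e ∈ T.edgeSet) (h1 : c2 ∈ edgesBetween T e c1) (h2 : c1 ∈ edgesBetween T e c2) :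
    False := by
  have hc1 : c1 ∈ T.edgeSet := h2.1
  have hec1 : e ≠ c1 := fun h => h2.2.1 h.symm
  obtain ⟨p, q, x, y, hpq, hxy, P, heq, hfq, hP, heP, hfP, hiff⟩ := pathRep hT he hc1 hec1
  have hc2P : c2 ∈ P.edges := (hiff c2).mp h1
  set W : T.Walk p x := Walk.cons hpq P with hW
  have heW : e ∈ W.edges := by rw [hW, Walk.edges_cons, heq]; exact List.mem_cons_self
  have hc2W : c2 ∈ W.edges := by rw [hW, Walk.edges_cons]; exact List.mem_cons_of_mem _ hc2P
  have := h2.2.2.2 _ _ W heW hc2W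
  rw [hW, Walk.edges_cons] at this
  rcases List.mem_cons.mp this with h | h
  · exact hec1 (heq.trans h.symm)
  · exact hfP h

lemma between_sub (hT : (T.induce T.support).IsTree) {e f c : Sym2 V}
    (he : e ∈ T.edgeSet) (hc : c ∈ edgesBetween T e f) :
    edgesBetween T e c ⊆ edgesBetween T e f := fun k hk =>
  edgesBetween_mono hc hk (fun h => not_mutual_between hT he (h ▸ hk) hc)

end TreeAux3

section Spine

variable [Fintype V] {T : SimpleGraph V} {r : Sym2 V → ℕ}

lemma spine_of_dominates_aux (hT : (T.induce T.support).IsTree)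
    (hr : Set.InjOn r T.edgeSet) :
    ∀ (n : ℕ) (e f : Sym2 V), e ∈ T.edgeSet → f ∈ T.edgeSet → r f - r e ≤ n →
      r e < r f → (∀ h ∈ edgesBetween T e f, r h < r f) → f ∈ spine T r e := by
  intro n
  induction n with
  | zero => intro e f _ _ hn hlt _; omega
  | succ n ih =>
    intro e f he hf hn hlt hbet
    set A : Set (Sym2 V) := {h | h ∈ edgesBetween T e f ∧ r e < r h} with hA
    have hAfin : A.Finite := (Set.toFinite T.edgeSet).subset (fun g hg => hg.1.1)
    have hex : ∃ w, AdjSup T r e w ∧ r w ≤ r f := by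
      by_cases hAne : A.Nonempty
      · obtain ⟨hs, hsA, hsmin⟩ := Set.exists_min_image A
          (fun h => ((edgesBetween T e h) ∩ A).ncard) hAfin hAne
        refine ⟨hs, ⟨hsA.1.1, hsA.2, ?_⟩, le_of_lt (hbet _ hsA.1)⟩
        intro k hk
        by_contra hge
        have hke : r e ≤ r k := not_lt.mp hge
        have hkne : r k ≠ r e := fun h => hk.2.1 (hr hk.1 he h)
        have hkgt : r e < r k := lt_of_le_of_ne hke (Ne.symm hkne)
        have hkef : k ∈ edgesBetween T e f := between_sub hT he hsA.1 hk
        have hkA : k ∈ A := ⟨hkef, hkgt⟩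
        have hsub : (edgesBetween T e k) ∩ A ⊆ ((edgesBetween T e hs) ∩ A) \ {k} := by
          rintro j ⟨hj, hjA⟩
          have hjne : j ≠ hs := fun h => not_mutual_between hT he (h ▸ hj) hk
          refine ⟨⟨⟨hj.1, hj.2.1, hjne,
            fun a b w hew hsw => hj.2.2.2 a b w hew (hk.2.2.2 a b w hew hsw)⟩, hjA⟩, ?_⟩
          simp only [Set.mem_singleton_iff]
          exact hj.2.2.1
        have hfin2 : ((edgesBetween T e hs) ∩ A).Finite := hAfin.subset (Set.inter_subset_right)
        have hcard : ((edgesBetween T e k) ∩ A).ncard < ((edgesBetween T e hs) ∩ A).ncard := by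
          calc ((edgesBetween T e k) ∩ A).ncard
              ≤ (((edgesBetween T e hs) ∩ A) \ {k}).ncard :=
                Set.ncard_le_ncard hsub (hfin2.subset Set.diff_subset)
            _ < ((edgesBetween T e hs) ∩ A).ncard :=
                Set.ncard_lt_ncard ((Set.ssubset_iff_of_subset Set.diff_subset).mpr
                  ⟨k, ⟨hk, hkA⟩, fun h => h.2 rfl⟩) hfin2
        exact absurd (hsmin k hkA) (not_le.mpr hcard)
      · refine ⟨f, ⟨hf, hlt, fun k hk => ?_⟩, le_rfl⟩
        have h1 : ¬ r e < r k := fun h => hAne ⟨k, hk, h⟩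
        have h2 : r k ≠ r e := fun h => hk.2.1 (hr hk.1 he h)
        omega
    obtain ⟨w, hw, hwf⟩ := hex
    have hSfin : {g | AdjSup T r e g}.Finite :=
      (Set.toFinite T.edgeSet).subset (fun g hg => hg.1)
    obtain ⟨g, hgS, hgmin⟩ := Set.exists_min_image _ r hSfin ⟨w, hw⟩
    have hparent : IsParent T r e g := ⟨hgS, fun x hx => hgmin x hx⟩
    have hgf : r g ≤ r f := le_trans (hgmin w hw) hwf
    by_cases hgef : g = f
    · exact Relation.ReflTransGen.single (hgef ▸ hparent)
    · have hglt : r g < r f := lt_of_le_of_ne hgf (fun h => hgef (hr hgS.1 hf h))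
      have hbet2 : ∀ k ∈ edgesBetween T g f, r k < r f := by
        intro k hk
        rcases edgesBetween_triangle (g := g) (f := f) he hk with (hk1 | hk1) | hk1
        · have := hgS.2.2 k (edgesBetween_comm T g e ▸ hk1)
          omega
        · rw [Set.mem_singleton_iff] at hk1
          rw [hk1]; exact hlt
        · exact hbet k hk1
      have hrec : f ∈ spine T r g :=
        ih g f hgS.1 hf (by have := hgS.2.1; omega) hglt hbet2
      exact Relation.ReflTransGen.head hparent hrec

lemma spine_of_dominates (hT : (T.induce T.support).IsTree)
    (hr : Set.InjOn r T.edgeSet) {e f : Sym2 V} (he : e ∈ T.edgeSet) (hf : f ∈ T.edgeSet)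
    (hlt : r e < r f) (hbet : ∀ h ∈ edgesBetween T e f, r h < r f) : f ∈ spine T r e :=
  spine_of_dominates_aux hT hr (r f - r e) e f he hf le_rfl hlt hbet

end Spine

section Merge

variable {G1 G2 : SimpleGraph V} {v : V}

lemma collapse (hsupp : G1.support ∩ G2.support = {v}) :
    ∀ {a b : V} (w : (G1 ⊔ G2).Walk a b), b ∈ G1.support →
      ∃ (a' : V) (w1 : G1.Walk a' b), (a ∈ G1.support → a' = a) ∧ (a' = a ∨ a' = v) ∧
        ∀ k ∈ w1.edges, k ∈ w.edges := by
  intro a b w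
  induction w with
  | nil => exact fun _ => ⟨_, Walk.nil, fun _ => rfl, Or.inl rfl, by simp⟩
  | @cons a c b h w ih =>
    intro hb
    obtain ⟨c', w1, hc'1, hc'2, hsub⟩ := ih hb
    rcases (sup_adj G1 G2 a c).mp h with h1 | h2
    · have hc : c ∈ G1.support := ⟨_, h1.symm⟩
      have hcc := hc'1 hc
      subst hcc
      refine ⟨a, Walk.cons h1 w1, fun _ => rfl, Or.inl rfl, ?_⟩
      intro k hk
      rw [Walk.edges_cons, List.mem_cons] at hk ⊢
      rcases hk with hk | hk
      · exact Or.inl hk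
      · exact Or.inr (hsub k hk)
    · have hc2 : c ∈ G2.support := ⟨_, h2.symm⟩
      have ha2 : a ∈ G2.support := ⟨_, h2⟩
      have hc'v : c' = v := by
        have hc's : c' ∈ G1.support := walk_start_mem_support w1 hb
        rcases hc'2 with rfl | rfl
        · have : c' ∈ ({v} : Set V) := hsupp ▸ Set.mem_inter hc's hc2
          exact this
        · rfl
      obtain rfl : v = c' := hc'v.symm
      refine ⟨v, w1, ?_, Or.inr rfl, fun k hk => List.mem_cons_of_mem _ (hsub k hk)⟩
      intro ha1
      have : a ∈ ({v} : Set V) := hsupp ▸ Set.mem_inter ha1 ha2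
      exact (Set.mem_singleton_iff.mp this).symm

lemma buildG1 (hsupp : G1.support ∩ G2.support = {v}) {a b c d : V}
    (w : (G1 ⊔ G2).Walk a b) (hc : c ∈ w.support) (hd : d ∈ w.support) (hd1 : d ∈ G1.support) :
    ∃ (c' : V) (w1 : G1.Walk c' d), (c ∈ G1.support → c' = c) ∧ (c' = c ∨ c' = v) ∧
      ∀ k ∈ w1.edges, k ∈ w.edges := by
  obtain ⟨w', hw'⟩ := exists_walk_subedges w hc hd
  obtain ⟨c', w1, h1, h2, h3⟩ := collapse hsupp w' hd1
  exact ⟨c', w1, h1, h2, fun k hk => hw' k (h3 k hk)⟩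

lemma edgesBetween_sup_eq (h1 : (G1.induce G1.support).IsTree)
    (hsupp : G1.support ∩ G2.support = {v}) {f g : Sym2 V}
    (hf : f ∈ G1.edgeSet) (hg : g ∈ G1.edgeSet) :
    edgesBetween (G1 ⊔ G2) f g = edgesBetween G1 f g := by
  obtain ⟨x, y, hxy, rfl⟩ := exists_adj_of_mem_edgeSet hf
  obtain ⟨z, t, hzt, rfl⟩ := exists_adj_of_mem_edgeSet hg
  have hx1 : x ∈ G1.support := ⟨_, hxy⟩
  have hz1 : z ∈ G1.support := ⟨_, hzt⟩
  have tr : ∀ {a b : V} (w1 : G1.Walk a b), ∀ j ∈ w1.edges, j ∈ (G1 ⊔ G2).edgeSet :=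
    fun w1 j hj => edgeSet_mono le_sup_left (w1.edges_subset_edgeSet hj)
  ext k
  constructor
  · rintro ⟨hkE, hkf, hkg, hkw⟩
    obtain ⟨wxz⟩ := tree_reachable h1 hx1 hz1
    set W1 : G1.Walk y t := Walk.cons hxy.symm (wxz.append (Walk.cons hzt Walk.nil)) with hW1
    have hfW : s(x, y) ∈ W1.edges := by
      rw [hW1, Walk.edges_cons, Sym2.eq_swap]; exact List.mem_cons_self
    have hgW : s(z, t) ∈ W1.edges := by
      rw [hW1, Walk.edges_cons, Walk.edges_append, Walk.edges_cons]; simp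
    have hkw1 := hkw _ _ (W1.transfer _ (tr W1))
      (by rw [Walk.edges_transfer]; exact hfW) (by rw [Walk.edges_transfer]; exact hgW)
    rw [Walk.edges_transfer] at hkw1
    refine ⟨W1.edges_subset_edgeSet hkw1, hkf, hkg, ?_⟩
    intro a b w hfw hgw
    have := hkw a b (w.transfer _ (tr w))
      (by rw [Walk.edges_transfer]; exact hfw) (by rw [Walk.edges_transfer]; exact hgw)
    rwa [Walk.edges_transfer] at this
  · rintro ⟨hkE, hkf, hkg, hkw⟩
    refine ⟨edgeSet_mono le_sup_left hkE, hkf, hkg, ?_⟩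
    intro a b w hfw hgw
    have hxw : x ∈ w.support := w.fst_mem_support_of_mem_edges hfw
    have hzw : z ∈ w.support := w.fst_mem_support_of_mem_edges hgw
    obtain ⟨c', w1, hc1, _, hsub⟩ := buildG1 hsupp w hxw hzw hz1
    obtain rfl : x = c' := (hc1 hx1).symm
    set W1 : G1.Walk y t := Walk.cons hxy.symm (w1.append (Walk.cons hzt Walk.nil)) with hW1
    have hfW : s(x, y) ∈ W1.edges := by
      rw [hW1, Walk.edges_cons, Sym2.eq_swap]; exact List.mem_cons_self
    have hgW : s(z, t) ∈ W1.edges := by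
      rw [hW1, Walk.edges_cons, Walk.edges_append, Walk.edges_cons]; simp
    have hk1 := hkw _ _ W1 hfW hgW
    rw [hW1, Walk.edges_cons, Walk.edges_append, Walk.edges_cons, Walk.edges_nil] at hk1
    rcases List.mem_cons.mp hk1 with hk | hk
    · exact absurd (hk.trans (Sym2.eq_swap)) hkf
    · rcases List.mem_append.mp hk with hk | hk
      · exact hsub k hk
      · rcases List.mem_cons.mp hk with hk | hk
        · exact absurd hk hkg
        · simp at hk

end Merge

theorem main_side [Fintype V] (G1 G2 : SimpleGraph V) (v : V) (r : Sym2 V → ℕ) (e1s : Sym2 V)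
    (h1 : (G1.induce G1.support).IsTree)
    (hsupp : G1.support ∩ G2.support = {v})
    (hdisj : Disjoint G1.edgeSet G2.edgeSet)
    (hr : Set.InjOn r (G1 ⊔ G2).edgeSet)
    (he1 : e1s ∈ G1.edgeSet ∧ v ∈ e1s ∧ ∀ f ∈ G1.edgeSet, v ∈ f → r e1s ≤ r f) :
    ∀ f ∈ G1.edgeSet, f ∉ spine G1 r e1s →
      (∀ g, AdjSup (G1 ⊔ G2) r f g ↔ AdjSup G1 r f g) ∧
      (∀ g, AdjInf (G1 ⊔ G2) r f g ↔ AdjInf G1 r f g) := by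
  intro f hf hfs
  haveI := Classical.decEq V
  have hE1sub : G1.edgeSet ⊆ (G1 ⊔ G2).edgeSet := by
    rw [edgeSet_sup]; exact Set.subset_union_left
  have hr1 : Set.InjOn r G1.edgeSet := hr.mono hE1sub
  have hfe1s : f ≠ e1s := fun h => hfs (h ▸ Relation.ReflTransGen.refl)
  obtain ⟨x, y, hxy, rfl⟩ := exists_adj_of_mem_edgeSet hf
  have hx1 : x ∈ G1.support := ⟨_, hxy⟩
  have hv1 : v ∈ G1.support := mem_support_of_mem_edge he1.1 he1.2.1
  obtain ⟨u, hu⟩ := Sym2.mem_iff_exists.mp he1.2.1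
  have hvu : G1.Adj v u := (G1.mem_edgeSet).mp (hu ▸ he1.1)
  -- key contradiction for g ∈ G2
  have key : ∀ g ∈ G2.edgeSet, (∀ h ∈ edgesBetween (G1 ⊔ G2) s(x, y) g, r h < r s(x, y)) →
      False := by
    intro g hg hbet
    obtain ⟨z, t', hzt', rfl⟩ := exists_adj_of_mem_edgeSet hg
    have hz2 : z ∈ G2.support := ⟨_, hzt'⟩
    have getwalk : ∀ {a b : V} (w : (G1 ⊔ G2).Walk a b), s(x, y) ∈ w.edges →
        s(z, t') ∈ w.edges → ∃ w1 : G1.Walk v x, ∀ k ∈ w1.edges, k ∈ w.edges := by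
      intro a b w hfw hgw
      have hxw : x ∈ w.support := w.fst_mem_support_of_mem_edges hfw
      have hzw : z ∈ w.support := w.fst_mem_support_of_mem_edges hgw
      obtain ⟨c', w1, _, hc2, hsub⟩ := buildG1 hsupp w hzw hxw hx1
      have hc'v : v = c' := by
        have hc's : c' ∈ G1.support := walk_start_mem_support w1 hx1
        rcases hc2 with rfl | rfl
        · have : c' ∈ ({v} : Set V) := hsupp ▸ Set.mem_inter hc's hz2
          exact this.symm
        · rfl
      obtain rfl := hc'v
      exact ⟨w1, hsub⟩
    -- (i)  r e1s < r f
    have hlt : r e1s < r s(x, y) := by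
      by_cases hvf : v ∈ s(x, y)
      · exact lt_of_le_of_ne (he1.2.2 _ hf hvf)
          (fun h => hfe1s (hr (hE1sub hf) (hE1sub he1.1) h.symm))
      · have hvx : v ≠ x := fun h => hvf (h ▸ Sym2.mem_mk_left _ _)
        obtain ⟨w0⟩ := tree_reachable h1 hv1 hx1
        have hPp : w0.bypass.IsPath := w0.bypass_isPath
        obtain ⟨c, h0, P', hPeq⟩ : ∃ c, ∃ h0 : G1.Adj v c, ∃ P' : G1.Walk c x,
            w0.bypass = Walk.cons h0 P' := by
          cases hP : w0.bypass with
          | nil => exact absurd rfl hvx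
          | cons h0 P' => exact ⟨_, h0, P', rfl⟩
        have hvc1 : s(v, c) ∈ G1.edgeSet := h0
        have hvcbet : s(v, c) ∈ edgesBetween (G1 ⊔ G2) s(x, y) s(z, t') := by
          refine ⟨hE1sub hvc1, fun h => hvf (h ▸ Sym2.mem_mk_left _ _), ?_, ?_⟩
          · exact fun h => Set.disjoint_left.mp hdisj hvc1 (h ▸ hg)
          · intro a b w hfw hgw
            obtain ⟨w1, hsub⟩ := getwalk w hfw hgw
            apply hsub
            apply path_edges_subset_walk h1 hPp w1
            rw [hPeq, Walk.edges_cons]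
            exact List.mem_cons_self
        calc r e1s ≤ r s(v, c) := he1.2.2 _ hvc1 (Sym2.mem_mk_left _ _)
          _ < r s(x, y) := hbet _ hvcbet
    -- (ii)
    have hbet1 : ∀ h ∈ edgesBetween G1 e1s s(x, y), r h < r s(x, y) := by
      intro k hk
      apply hbet
      refine ⟨hE1sub hk.1, hk.2.2.1, ?_, ?_⟩
      · exact fun h => Set.disjoint_left.mp hdisj hk.1 (h ▸ hg)
      · intro a b w hfw hgw
        obtain ⟨w1, hsub⟩ := getwalk w hfw hgw
        set W1 : G1.Walk u y := Walk.cons hvu.symm (w1.append (Walk.cons hxy Walk.nil)) with hW1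
        have heW : e1s ∈ W1.edges := by
          rw [hW1, Walk.edges_cons, Sym2.eq_swap, ← hu]
          exact List.mem_cons_self
        have hfW : s(x, y) ∈ W1.edges := by
          rw [hW1, Walk.edges_cons, Walk.edges_append, Walk.edges_cons]; simp
        have hkW := hk.2.2.2 _ _ W1 heW hfW
        rw [hW1, Walk.edges_cons, Walk.edges_append, Walk.edges_cons, Walk.edges_nil] at hkW
        rcases List.mem_cons.mp hkW with hkc | hkc
        · exact absurd (hkc.trans ((Sym2.eq_swap).trans hu.symm)) hk.2.1
        · rcases List.mem_append.mp hkc with hkc | hkc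
          · exact hsub k hkc
          · rcases List.mem_cons.mp hkc with hkc | hkc
            · exact absurd hkc hk.2.2.1
            · simp at hkc
    exact hfs (spine_of_dominates h1 hr1 he1.1 hf hlt hbet1)
  -- assemble
  constructor
  · intro g
    constructor
    · rintro ⟨hgE, hlt, hbet⟩
      rw [edgeSet_sup] at hgE
      rcases hgE with hgE | hgE
      · exact ⟨hgE, hlt, by rw [← edgesBetween_sup_eq h1 hsupp hf hgE]; exact hbet⟩
      · exact absurd hbet (by intro hb; exact key g hgE hb)
    · rintro ⟨hgE, hlt, hbet⟩
      exact ⟨hE1sub hgE, hlt, by rw [edgesBetween_sup_eq h1 hsupp hf hgE]; exact hbet⟩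
  · intro g
    constructor
    · rintro ⟨hgE, hlt, hbet⟩
      rw [edgeSet_sup] at hgE
      rcases hgE with hgE | hgE
      · exact ⟨hgE, hlt, by rw [← edgesBetween_sup_eq h1 hsupp hf hgE]; exact hbet⟩
      · exact absurd hbet (by intro hb; exact key g hgE hb)
    · rintro ⟨hgE, hlt, hbet⟩
      exact ⟨hE1sub hgE, hlt, by rw [edgesBetween_sup_eq h1 hsupp hf hgE]; exact hbet⟩


/- Merge setting: `G1` and `G2` are finite trees (on their supports) over a
common ambient vertex type, sharing exactly the vertex `v` and no edges, so
`G1 ⊔ G2` is a tree. A single injective rank function `r` is given on the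
edges of `G1 ⊔ G2`. `e1s` and `e2s` are the minimum-rank edges incident to
`v` in `G1` and `G2` respectively. -/

variable [Fintype V] (G1 G2 : SimpleGraph V) (v : V) (r : Sym2 V → ℕ)
  (e1s e2s : Sym2 V)

/-- Invariance off the characteristic spine: for every edge `f` of `G1` not on
`spine1(e1*)`, the adjacent superiors and adjacent inferiors of `f` are the
same in `G = G1 ⊔ G2` as in `G1`; symmetrically for `G2`. -/
theorem stmt10
    (h1 : (G1.induce G1.support).IsTree) (h2 : (G2.induce G2.support).IsTree)
    (hne1 : G1.edgeSet.Nonempty) (hne2 : G2.edgeSet.Nonempty)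
    (hsupp : G1.support ∩ G2.support = {v})
    (hdisj : Disjoint G1.edgeSet G2.edgeSet)
    (hr : Set.InjOn r (G1 ⊔ G2).edgeSet)
    (he1 : e1s ∈ G1.edgeSet ∧ v ∈ e1s ∧ ∀ f ∈ G1.edgeSet, v ∈ f → r e1s ≤ r f)
    (he2 : e2s ∈ G2.edgeSet ∧ v ∈ e2s ∧ ∀ f ∈ G2.edgeSet, v ∈ f → r e2s ≤ r f) :
    (∀ f ∈ G1.edgeSet, f ∉ spine G1 r e1s →
      (∀ g, AdjSup (G1 ⊔ G2) r f g ↔ AdjSup G1 r f g) ∧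
      (∀ g, AdjInf (G1 ⊔ G2) r f g ↔ AdjInf G1 r f g)) ∧
    (∀ f ∈ G2.edgeSet, f ∉ spine G2 r e2s →
      (∀ g, AdjSup (G1 ⊔ G2) r f g ↔ AdjSup G2 r f g) ∧
      (∀ g, AdjInf (G1 ⊔ G2) r f g ↔ AdjInf G2 r f g)) := by
  constructor
  · exact main_side G1 G2 v r e1s h1 hsupp hdisj hr he1
  · have hsupp' : G2.support ∩ G1.support = {v} := by rw [Set.inter_comm]; exact hsupp
    have hr' : Set.InjOn r (G2 ⊔ G1).edgeSet := by rw [sup_comm]; exact hr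
    have hmain := main_side G2 G1 v r e2s h2 hsupp' hdisj.symm hr' he2
    intro f hf hfs
    rw [sup_comm G1 G2]
    exact hmain f hf hfs
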